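/- The ideal Z = {S ⊆ ω : |S ∩ [1,n]|/n → 0} of asymptotic density zero sets admits a finite-to-one function f : ω → ω such that f⁻¹(A) ∈ Z if and only if A is finite; consequently there exists an uncountable Z-mad family. -/

import Mathlib

open Set Filter

/-- An ideal on ω: closed under subsets and finite unions, contains all finite sets, ω ∉ I. -/
def IsIdeal (I : Set (Set ℕ)) : Prop :=
  (∀ A B : Set ℕ, A ∈ I → B ⊆ A → B ∈ I) ∧
  (∀ A ∈ I, ∀ B ∈ I, A ∪ B ∈ I) ∧
  (∀ A : Set ℕ, A.Finite → A ∈ I) ∧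
  (Set.univ : Set ℕ) ∉ I

/-- A real sequence is I-convergent to 0. -/
def IConvZero (I : Set (Set ℕ)) (x : ℕ → ℝ) : Prop :=
  ∀ ε : ℝ, 0 < ε → {n | ε ≤ |x n|} ∈ I

/-- c₀(I) ∩ ℓ∞ : bounded sequences I-convergent to 0 (ℓ∞ = bounded functions ℕ → ℝ, sup norm). -/
def c0I (I : Set (Set ℕ)) : Set (BoundedContinuousFunction ℕ ℝ) :=
  {x | IConvZero I (fun n => x n)}

/-- An I-mad family: I-positive sets, pairwise intersections in I, maximal. -/
def IMad (I : Set (Set ℕ)) (𝒜 : Set (Set ℕ)) : Prop :=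
  (∀ A ∈ 𝒜, A ∉ I) ∧
  (∀ A ∈ 𝒜, ∀ B ∈ 𝒜, A ≠ B → A ∩ B ∈ I) ∧
  (∀ X : Set ℕ, X ∉ I → ∃ A ∈ 𝒜, X ∩ A ∉ I)

/-- The indicator sequence 1_X as an element of ℓ∞. -/
noncomputable def ind (X : Set ℕ) : BoundedContinuousFunction ℕ ℝ :=
  BoundedContinuousFunction.ofNormedAddCommGroupDiscrete (X.indicator 1) 1 (by
    intro n
    by_cases h : n ∈ X <;> simp [Set.indicator_apply, h])

/-- The asymptotic density zero ideal Z. -/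
noncomputable def densityZeroIdeal : Set (Set ℕ) :=
  {S : Set ℕ | Filter.Tendsto
    (fun n : ℕ => (Nat.card ↑(S ∩ Set.Icc 1 n) : ℝ) / n) Filter.atTop (nhds 0)}

/-- the finite-to-one function -/
def ffZ (n : ℕ) : ℕ := Nat.log 2 (n + 1)

lemma ffZ_fiber_finite (k : ℕ) : (ffZ ⁻¹' {k}).Finite := by
  apply Set.Finite.subset (Set.finite_Iio (2 ^ (k + 1)))
  intro m hm
  simp only [Set.mem_preimage, Set.mem_singleton_iff] at hm
  have h := Nat.lt_pow_succ_log_self (by norm_num : 1 < 2) (m + 1)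
  rw [show Nat.log 2 (m + 1) = k from hm] at h
  simp only [Set.mem_Iio]
  omega

lemma ffZ_surj : Function.Surjective ffZ := by
  intro k
  refine ⟨2 ^ k - 1, ?_⟩
  have h1 : 1 ≤ 2 ^ k := Nat.one_le_two_pow
  show Nat.log 2 (2 ^ k - 1 + 1) = k
  rw [show 2 ^ k - 1 + 1 = 2 ^ k by omega]
  exact Nat.log_pow (b := 2) (by norm_num) k

lemma ffZ_preimage_finite {A : Set ℕ} (hA : A.Finite) : (ffZ ⁻¹' A).Finite := by
  rw [← Set.biUnion_preimage_singleton]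
  exact hA.biUnion (fun k _ => ffZ_fiber_finite k)

lemma finite_mem_Z {S : Set ℕ} (hS : S.Finite) : S ∈ densityZeroIdeal := by
  have key : ∀ n : ℕ, (Nat.card ↑(S ∩ Set.Icc 1 n) : ℝ) / n ≤ (S.ncard : ℝ) / n := by
    intro n
    rcases Nat.eq_zero_or_pos n with h | h
    · simp [h]
    · apply div_le_div_of_nonneg_right _ (Nat.cast_nonneg n)
      · rw [Nat.card_coe_set_eq]
        exact_mod_cast Set.ncard_le_ncard Set.inter_subset_left hS
  exact squeeze_zero (fun n => div_nonneg (by positivity) (Nat.cast_nonneg n)) key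
    (tendsto_const_div_atTop_nhds_zero_nat _)

lemma not_Z_of_infinite {A : Set ℕ} (hA : A.Infinite) : ffZ ⁻¹' A ∉ densityZeroIdeal := by
  intro hZ
  have hev : ∀ᶠ n : ℕ in atTop,
      (Nat.card ↑(ffZ ⁻¹' A ∩ Set.Icc 1 n) : ℝ) / n < 1 / 2 :=
    hZ.eventually (gt_mem_nhds (by norm_num))
  rw [eventually_atTop] at hev
  obtain ⟨N0, hN0⟩ := hev
  obtain ⟨k, hkA, hk⟩ := hA.exists_gt (N0 + 1)
  have h2k : 2 ≤ 2 ^ k := by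
    calc 2 = 2 ^ 1 := rfl
    _ ≤ 2 ^ k := Nat.pow_le_pow_right (by norm_num) (by omega)
  have hpow : 2 ^ (k + 1) = 2 * 2 ^ k := by rw [pow_succ]; ring
  have hklt : k < 2 ^ k := Nat.lt_two_pow_self (n := k)
  set N := 2 ^ (k + 1) - 2 with hN
  have hNk : k ≤ N := by omega
  have hsub : Set.Icc (2 ^ k - 1) (2 ^ (k + 1) - 2) ⊆ ffZ ⁻¹' A ∩ Set.Icc 1 N := by
    intro n hn
    rw [Set.mem_Icc] at hn
    obtain ⟨h1, h2⟩ := hn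
    constructor
    · show ffZ n ∈ A
      have hl : Nat.log 2 (n + 1) = k :=
        Nat.log_eq_of_pow_le_of_lt_pow (by omega) (by omega)
      show Nat.log 2 (n + 1) ∈ A
      rwa [hl]
    · rw [Set.mem_Icc]; omega
  have hfin : (ffZ ⁻¹' A ∩ Set.Icc 1 N).Finite :=
    Set.Finite.inter_of_right (Set.finite_Icc 1 N) _
  have hcard : 2 ^ k ≤ (ffZ ⁻¹' A ∩ Set.Icc 1 N).ncard := by
    have h := Set.ncard_le_ncard hsub hfin
    have hic : (Set.Icc (2 ^ k - 1) (2 ^ (k + 1) - 2)).ncard = 2 ^ k := by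
      rw [Set.ncard_eq_toFinset_card', Set.toFinset_Icc, Nat.card_Icc]
      omega
    omega
  have hlt := hN0 N (by omega)
  have hge : (1 : ℝ) / 2 ≤ (Nat.card ↑(ffZ ⁻¹' A ∩ Set.Icc 1 N) : ℝ) / N := by
    rw [Nat.card_coe_set_eq]
    have hNpos : (0 : ℝ) < N := by
      have : 0 < N := by omega
      exact_mod_cast this
    rw [div_le_div_iff₀ (by norm_num) hNpos]
    have hc : (2 ^ k : ℝ) ≤ ((ffZ ⁻¹' A ∩ Set.Icc 1 N).ncard : ℝ) := by exact_mod_cast hcard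
    have hN2 : (N : ℝ) ≤ 2 * 2 ^ k := by
      have : N ≤ 2 * 2 ^ k := by omega
      exact_mod_cast this
    linarith
  rw [Nat.card_coe_set_eq] at hlt hge
  linarith

/-- encoded prefixes of a binary sequence -/
def prefZ (x : ℕ → Bool) (n : ℕ) : ℕ := Encodable.encode (List.ofFn (fun i : Fin n => x i))

lemma prefZ_eq {x y : ℕ → Bool} {n m : ℕ} (h : prefZ x n = prefZ y m) :
    n = m ∧ ∀ i < n, x i = y i := by
  have h' := Encodable.encode_injective h
  have hlen : n = m := by
    have := congrArg List.length h'
    simpa using this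
  subst hlen
  rw [List.ofFn_inj] at h'
  exact ⟨rfl, fun i hi => congrFun h' ⟨i, hi⟩⟩

lemma prefZ_inj (x : ℕ → Bool) : Function.Injective (prefZ x) :=
  fun _ _ h => (prefZ_eq h).1

lemma prefZ_range_infinite (x : ℕ → Bool) : (Set.range (prefZ x)).Infinite :=
  Set.infinite_range_of_injective (prefZ_inj x)

lemma prefZ_inter_finite {x y : ℕ → Bool} (hxy : x ≠ y) :
    (Set.range (prefZ x) ∩ Set.range (prefZ y)).Finite := by
  obtain ⟨t, ht⟩ := Function.ne_iff.mp hxy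
  apply Set.Finite.subset ((Set.finite_Iic t).image (prefZ x))
  rintro c ⟨⟨n, rfl⟩, ⟨m, hm⟩⟩
  obtain ⟨hnm, hpref⟩ := prefZ_eq hm.symm
  refine ⟨n, ?_, rfl⟩
  simp only [Set.mem_Iic]
  by_contra hcon
  exact ht (hpref t (by omega))

noncomputable def GZ (x : ℕ → Bool) : Set ℕ := ffZ ⁻¹' (Set.range (prefZ x))

lemma GZ_inj : Function.Injective GZ := by
  intro x y h
  by_contra hxy
  have hpre : Set.range (prefZ x) = Set.range (prefZ y) :=
    Set.preimage_injective.mpr ffZ_surj h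
  have : (Set.range (prefZ x)).Finite := by
    rw [show Set.range (prefZ x) = Set.range (prefZ x) ∩ Set.range (prefZ y) by
      rw [← hpre, Set.inter_self]]
    exact prefZ_inter_finite hxy
  exact prefZ_range_infinite x this

lemma uncount_nb : ¬ Countable (ℕ → Bool) := by
  intro h
  have he : (ℕ → Bool) ≃ Set ℕ :=
    Equiv.arrowCongr (Equiv.refl ℕ) Equiv.propEquivBool.symm
  have : Countable (Set ℕ) := Countable.of_equiv _ he
  obtain ⟨f, hf⟩ := (countable_iff_exists_injective (Set ℕ)).mp this
  exact Function.cantor_injective f hf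


/-- Z admits a finite-to-one f with f⁻¹(A) ∈ Z iff A finite; consequently
there is an uncountable Z-mad family. -/
theorem densityZero_rudinBlass_and_mad :
    (∃ f : ℕ → ℕ, (∀ n : ℕ, (f ⁻¹' {n}).Finite) ∧
      ∀ A : Set ℕ, f ⁻¹' A ∈ densityZeroIdeal ↔ A.Finite) ∧
    ∃ 𝒜 : Set (Set ℕ), IMad densityZeroIdeal 𝒜 ∧ ¬ 𝒜.Countable := by
  constructor
  · refine ⟨ffZ, ffZ_fiber_finite, fun A => ⟨?_, ?_⟩⟩
    · intro h
      by_contra hA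
      exact not_Z_of_infinite hA h
    · intro hA
      exact finite_mem_Z (ffZ_preimage_finite hA)
  · -- Zorn
    set Z := densityZeroIdeal with hZdef
    set S : Set (Set (Set ℕ)) :=
      {F | (∀ A ∈ F, A ∉ Z) ∧ ∀ A ∈ F, ∀ B ∈ F, A ≠ B → A ∩ B ∈ Z} with hSdef
    have hBS : Set.range GZ ∈ S := by
      constructor
      · rintro A ⟨x, rfl⟩
        exact not_Z_of_infinite (prefZ_range_infinite x)
      · rintro A ⟨x, rfl⟩ B ⟨y, rfl⟩ hne
        have hxy : x ≠ y := fun h => hne (by rw [h])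
        have : GZ x ∩ GZ y = ffZ ⁻¹' (Set.range (prefZ x) ∩ Set.range (prefZ y)) := by
          simp [GZ, Set.preimage_inter]
        rw [this]
        exact finite_mem_Z (ffZ_preimage_finite (prefZ_inter_finite hxy))
    have hch : ∀ c ⊆ S, IsChain (· ⊆ ·) c → c.Nonempty →
        ∃ ub ∈ S, ∀ s ∈ c, s ⊆ ub := by
      intro c hcS hchain hcne
      refine ⟨⋃₀ c, ⟨?_, ?_⟩, fun s hs => Set.subset_sUnion_of_mem hs⟩
      · rintro A ⟨F, hFc, hAF⟩
        exact (hcS hFc).1 A hAF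
      · rintro A ⟨F1, hF1c, hAF⟩ B ⟨F2, hF2c, hBF⟩ hne
        rcases hchain.total hF1c hF2c with h | h
        · exact (hcS hF2c).2 A (h hAF) B hBF hne
        · exact (hcS hF1c).2 A hAF B (h hBF) hne
    obtain ⟨m, hBm, hmax⟩ := zorn_subset_nonempty S hch _ hBS
    refine ⟨m, ⟨hmax.1.1, hmax.1.2, ?_⟩, ?_⟩
    · intro X hX
      by_cases hXm : X ∈ m
      · exact ⟨X, hXm, by simpa using hX⟩
      · by_contra hno
        push_neg at hno
        have hins : insert X m ∈ S := by
          constructor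
          · rintro A (rfl | hA)
            · exact hX
            · exact hmax.1.1 A hA
          · rintro A (rfl | hA) B (rfl | hB) hne
            · exact absurd rfl hne
            · exact hno B hB
            · rw [Set.inter_comm]; exact hno A hA
            · exact hmax.1.2 A hA B hB hne
        have hsub := hmax.2 hins (Set.subset_insert X m)
        exact hXm (hsub (Set.mem_insert X m))
    · intro hcount
      have h1 : (Set.range GZ).Countable := hcount.mono hBm
      have h2 := h1.to_subtype
      have : Countable (ℕ → Bool) :=
        Countable.of_equiv _ (Equiv.ofInjective GZ GZ_inj).symm
      exact uncount_nb this
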